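/- Let (Z_n) be the aging branching process with non-decreasing ages a_{n+1} ≤ a_n + 1 and offspring mean m. Then M_n = (m+1)^{-n}·Z_n is a non-negative supermartingale with respect to the natural filtration, hence converges almost surely to a finite non-negative random variable. -/

import Mathlib

open MeasureTheory ProbabilityTheory Filter

private lemma indep_mono' {Ω : Type*} {mΩ : MeasurableSpace Ω} {μ : Measure Ω}
    {m₁ m₂ m₁' m₂' : MeasurableSpace Ω}
    (h : Indep m₁ m₂ μ) (h1 : m₁' ≤ m₁) (h2 : m₂' ≤ m₂) : Indep m₁' m₂' μ := by
  rw [Indep_iff] at h ⊢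
  exact fun t1 t2 ht1 ht2 => h t1 t2 (h1 _ ht1) (h2 _ ht2)

/-- The set integral of an integrable function independent of a σ-algebra `𝒢`,
over a set of `𝒢`. -/
private lemma setIntegral_indep' {Ω : Type*} {𝒢 m' : MeasurableSpace Ω}
    {mΩ : MeasurableSpace Ω} {μ : Measure Ω}
    [IsProbabilityMeasure μ] (h𝒢 : 𝒢 ≤ mΩ)
    {X : Ω → ℝ} (hXmeas : Measurable[m'] X) (hXint : Integrable X μ)
    (hindep : Indep m' 𝒢 μ)
    {B : Set Ω} (hB : MeasurableSet[𝒢] B) :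
    ∫ ω in B, X ω ∂μ = (μ B).toReal * ∫ ω, X ω ∂μ := by
  have hgmeas : Measurable[𝒢] (B.indicator fun _ => (1 : ℝ)) :=
    (@measurable_const ℝ Ω _ 𝒢 1).indicator hB
  have hIF : IndepFun X (B.indicator fun _ => (1 : ℝ)) μ := by
    rw [IndepFun_iff_Indep]
    exact indep_mono' hindep (measurable_iff_comap_le.mp hXmeas)
      (measurable_iff_comap_le.mp hgmeas)
  have hgint : Integrable (B.indicator fun _ => (1 : ℝ)) μ :=
    (integrable_const (1 : ℝ)).indicator (h𝒢 _ hB)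
  have hmul := hIF.integral_mul_eq_mul_integral hXint.aestronglyMeasurable hgint.aestronglyMeasurable
  have hXg : X * (B.indicator fun _ => (1 : ℝ)) = B.indicator X := by
    funext ω; by_cases hω : ω ∈ B <;> simp [hω]
  have hg1 : ∫ ω, (B.indicator fun _ => (1 : ℝ)) ω ∂μ = (μ B).toReal := by
    rw [integral_indicator (h𝒢 _ hB)]; simp; rfl
  calc ∫ ω in B, X ω ∂μ
      = ∫ ω, (B.indicator X) ω ∂μ := (integral_indicator (h𝒢 _ hB)).symm
    _ = ∫ ω, (X * (B.indicator fun _ => (1 : ℝ))) ω ∂μ := by rw [hXg]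
    _ = (∫ ω, X ω ∂μ) * ∫ ω, (B.indicator fun _ => (1 : ℝ)) ω ∂μ := hmul
    _ = (μ B).toReal * ∫ ω, X ω ∂μ := by rw [hg1, mul_comm]

/-- For the aging branching process with non-decreasing ages,
`a (n+1) ≤ a n + 1`, and offspring mean `m`, the process `M n = (m+1)^{-n}·Z n`
is a non-negative supermartingale, hence converges almost surely to a finite
non-negative random variable. -/
theorem stmt19 {Ω : Type*} {mΩ : MeasurableSpace Ω} (μ : Measure Ω)
    [IsProbabilityMeasure μ] (ℱ : Filtration ℕ mΩ)
    (m : ℝ) (hm : 0 < m)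
    (a : ℕ → ℕ) (hamono : Monotone a) (hstep : ∀ n, a (n + 1) ≤ a n + 1)
    (R : ℕ → ℕ → Ω → ℕ) (hRmeas : ∀ j n, Measurable (R j n))
    (hRid : ∀ j n, IdentDistrib (R j n) (R 0 0) μ μ)
    (hRint : Integrable (fun ω => (R 0 0 ω : ℝ)) μ)
    (hRmean : ∫ ω, (R 0 0 ω : ℝ) ∂μ = m)
    (hRiid : ∀ n, iIndepFun (fun j : ℕ => R j (n + 1)) μ)
    (hRindep : ∀ n, Indep
      (⨆ j, MeasurableSpace.comap (R j (n + 1)) inferInstance) (ℱ n) μ)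
    (Z : ℕ → ℕ → Ω → ℕ)
    (hZadapted : ∀ n b, Measurable[ℱ n] (Z n b))
    (hZint : ∀ n b, Integrable (fun ω => (Z n b ω : ℝ)) μ)
    (hZ00 : ∀ ω, Z 0 0 ω = 1) (hZ0 : ∀ b, 1 ≤ b → ∀ ω, Z 0 b ω = 0)
    (hshift : ∀ n b, 1 ≤ b → ∀ ω,
      Z (n + 1) b ω = if b ≤ a (n + 1) then Z n (b - 1) ω else 0)
    (hnew : ∀ n ω, Z (n + 1) 0 ω =
      ∑ j ∈ Finset.range (∑ b ∈ Finset.range (a n + 1), Z n b ω), R j (n + 1) ω)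
    (M : ℕ → Ω → ℝ)
    (hM : ∀ n ω, M n ω =
      ((m + 1) ^ n)⁻¹ * ((∑ b ∈ Finset.range (a n + 1), Z n b ω : ℕ) : ℝ)) :
    (∀ n ω, 0 ≤ M n ω) ∧ Supermartingale M ℱ μ ∧
      ∃ L : Ω → ℝ, (∀ᵐ ω ∂μ, 0 ≤ L ω) ∧
        ∀ᵐ ω ∂μ, Tendsto (fun n => M n ω) atTop (nhds (L ω)) := by
  classical
  have hm1 : (0 : ℝ) < m + 1 := by linarith
  have hm1n : ∀ n : ℕ, (0 : ℝ) < (m + 1) ^ n := fun n => pow_pos hm1 n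
  set N : ℕ → Ω → ℕ := fun n ω => ∑ b ∈ Finset.range (a n + 1), Z n b ω with hNdef
  have hcast : Measurable (fun k : ℕ => (k : ℝ)) := measurable_from_top
  have hNmeas : ∀ n, Measurable[ℱ n] (N n) := fun n =>
    Finset.measurable_sum _ (fun b _ => hZadapted n b)
  have hNcast : ∀ n ω, ((N n ω : ℕ) : ℝ) = ∑ b ∈ Finset.range (a n + 1), (Z n b ω : ℝ) := by
    intro n ω; simp [hNdef]
  have hNint : ∀ n, Integrable (fun ω => (N n ω : ℝ)) μ := by
    intro n
    have : (fun ω => (N n ω : ℝ))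
        = fun ω => ∑ b ∈ Finset.range (a n + 1), (Z n b ω : ℝ) := by
      funext ω; exact hNcast n ω
    rw [this]
    exact integrable_finset_sum _ (fun b _ => hZint n b)
  -- distribution facts about R
  have hRD : ∀ j n, IdentDistrib (fun ω => (R j n ω : ℝ)) (fun ω => (R 0 0 ω : ℝ)) μ μ :=
    fun j n => (hRid j n).comp hcast
  have hRint' : ∀ j n, Integrable (fun ω => (R j n ω : ℝ)) μ :=
    fun j n => (hRD j n).integrable_iff.mpr hRint
  have hRmean' : ∀ j n, ∫ ω, (R j n ω : ℝ) ∂μ = m :=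
    fun j n => (hRD j n).integral_eq.trans hRmean
  -- the conditional expectation identity
  have hcond : ∀ n, (fun ω => m * (N n ω : ℝ))
      =ᵐ[μ] μ[(fun ω => (Z (n + 1) 0 ω : ℝ)) | ℱ n] := by
    intro n
    refine ae_eq_condExp_of_forall_setIntegral_eq (ℱ.le n) (hZint (n + 1) 0)
      (fun s _ _ => ((hNint n).const_mul m).integrableOn) ?_ ?_
    · intro A hA _
      set B : ℕ → Set Ω := fun k => A ∩ {ω | N n ω = k} with hBdef
      have hBmeas : ∀ k, MeasurableSet[ℱ n] (B k) := fun k =>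
        hA.inter (hNmeas n (measurableSet_singleton k))
      have hBmeas' : ∀ k, MeasurableSet (B k) := fun k => ℱ.le n _ (hBmeas k)
      have hdisj : Pairwise (Function.onFun Disjoint B) := by
        intro i j hij
        refine Set.disjoint_left.2 ?_
        rintro ω ⟨-, hi⟩ ⟨-, hj⟩
        exact hij ((hi : N n ω = i).symm.trans hj)
      have hUnion : (⋃ k, B k) = A := by
        ext ω
        simp only [hBdef, Set.mem_iUnion, Set.mem_inter_iff, Set.mem_setOf_eq]
        exact ⟨fun ⟨k, h, _⟩ => h, fun h => ⟨N n ω, h, rfl⟩⟩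
      have h1 : HasSum (fun k => ∫ ω in B k, (Z (n + 1) 0 ω : ℝ) ∂μ)
          (∫ ω in A, (Z (n + 1) 0 ω : ℝ) ∂μ) := by
        have := hasSum_integral_iUnion hBmeas' hdisj
          ((hZint (n + 1) 0).integrableOn :
            IntegrableOn (fun ω => (Z (n + 1) 0 ω : ℝ)) (⋃ k, B k) μ)
        rwa [hUnion] at this
      have h2 : HasSum (fun k => ∫ ω in B k, m * (N n ω : ℝ) ∂μ)
          (∫ ω in A, m * (N n ω : ℝ) ∂μ) := by
        have := hasSum_integral_iUnion hBmeas' hdisj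
          (((hNint n).const_mul m).integrableOn :
            IntegrableOn (fun ω => m * (N n ω : ℝ)) (⋃ k, B k) μ)
        rwa [hUnion] at this
      have hterm : ∀ k, ∫ ω in B k, (Z (n + 1) 0 ω : ℝ) ∂μ
          = ∫ ω in B k, m * (N n ω : ℝ) ∂μ := by
        intro k
        have hRjmeas : ∀ j : ℕ,
            Measurable[⨆ j, MeasurableSpace.comap (R j (n + 1)) inferInstance]
              (fun ω => (R j (n + 1) ω : ℝ)) := by
          intro j
          have h1 : Measurable[MeasurableSpace.comap (R j (n + 1)) inferInstance]
              (R j (n + 1)) := Measurable.of_comap_le le_rfl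
          exact hcast.comp
            (h1.mono (le_iSup (fun j => MeasurableSpace.comap (R j (n + 1)) inferInstance) j)
              le_rfl)
        have hL : ∫ ω in B k, (Z (n + 1) 0 ω : ℝ) ∂μ
            = ∫ ω in B k, (∑ j ∈ Finset.range k, (R j (n + 1) ω : ℝ)) ∂μ := by
          refine setIntegral_congr_fun (hBmeas' k) ?_
          intro ω hω
          show ((Z (n + 1) 0 ω : ℕ) : ℝ) = ∑ j ∈ Finset.range k, (R j (n + 1) ω : ℝ)
          rw [hnew n ω,
            show (∑ b ∈ Finset.range (a n + 1), Z n b ω) = k from (hω.2 : N n ω = k)]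
          push_cast
          rfl
        have hR : ∫ ω in B k, m * (N n ω : ℝ) ∂μ = m * k * (μ (B k)).toReal := by
          have heq : ∫ ω in B k, m * (N n ω : ℝ) ∂μ
              = ∫ _ω in B k, m * (k : ℝ) ∂μ := by
            refine setIntegral_congr_fun (hBmeas' k) ?_
            intro ω hω
            show m * ((N n ω : ℕ) : ℝ) = m * (k : ℝ)
            rw [(hω.2 : N n ω = k)]
          rw [heq, setIntegral_const, smul_eq_mul, Measure.real]
          ring
        rw [hL, hR, integral_finset_sum _ (fun j _ => (hRint' j (n + 1)).integrableOn)]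
        have hterm' : ∀ j ∈ Finset.range k,
            ∫ ω in B k, (R j (n + 1) ω : ℝ) ∂μ = (μ (B k)).toReal * m := by
          intro j _
          rw [setIntegral_indep' (ℱ.le n) (hRjmeas j) (hRint' j (n + 1)) (hRindep n)
            (hBmeas k), hRmean' j (n + 1)]
        rw [Finset.sum_congr rfl hterm', Finset.sum_const, Finset.card_range,
          nsmul_eq_mul]
        ring
      have hfun : (fun k => ∫ ω in B k, m * (N n ω : ℝ) ∂μ)
          = fun k => ∫ ω in B k, (Z (n + 1) 0 ω : ℝ) ∂μ :=
        funext fun k => (hterm k).symm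
      rw [hfun] at h2
      exact (h1.unique h2).symm
    · exact StronglyMeasurable.aestronglyMeasurable
        (((hcast.comp (hNmeas n)).const_mul m).stronglyMeasurable)
  -- adaptedness and integrability of M
  have hMfun : ∀ n, M n = fun ω => ((m + 1) ^ n)⁻¹ * (N n ω : ℝ) := fun n => funext (hM n)
  have hMadap : StronglyAdapted ℱ M := by
    intro n
    rw [hMfun n]
    exact (((hcast.comp (hNmeas n)).const_mul _)).stronglyMeasurable
  have hMint : ∀ n, Integrable (M n) μ := by
    intro n
    rw [hMfun n]
    exact (hNint n).const_mul _
  have hnonneg : ∀ n ω, 0 ≤ M n ω := by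
    intro n ω
    rw [hM n ω]
    exact mul_nonneg (inv_nonneg.2 (hm1n n).le) (Nat.cast_nonneg _)
  -- the supermartingale property
  have hsuper : Supermartingale M ℱ μ := by
    refine supermartingale_nat hMadap hMint ?_
    intro n
    set c : ℝ := ((m + 1) ^ (n + 1))⁻¹ with hc
    set W : Ω → ℝ := fun ω => ∑ i ∈ Finset.range (a (n + 1)), (Z n i ω : ℝ) with hW
    set S : Ω → ℝ := fun ω => (Z (n + 1) 0 ω : ℝ) with hS
    have hWint : Integrable W μ := integrable_finset_sum _ (fun i _ => hZint n i)
    have hSint : Integrable S μ := hZint (n + 1) 0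
    have hWsm : StronglyMeasurable[ℱ n] W :=
      (Finset.measurable_sum _ (fun i _ => hcast.comp (hZadapted n i))).stronglyMeasurable
    have hdecomp : (fun ω => (N (n + 1) ω : ℝ)) = W + S := by
      funext ω
      show ((N (n + 1) ω : ℕ) : ℝ) = W ω + S ω
      rw [hNcast (n + 1) ω, Finset.sum_range_succ']
      show (∑ i ∈ Finset.range (a (n + 1)), ((Z (n + 1) (i + 1) ω : ℕ) : ℝ))
            + ((Z (n + 1) 0 ω : ℕ) : ℝ)
          = (∑ i ∈ Finset.range (a (n + 1)), ((Z n i ω : ℕ) : ℝ))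
            + ((Z (n + 1) 0 ω : ℕ) : ℝ)
      congr 1
      refine Finset.sum_congr rfl fun i hi => ?_
      rw [hshift n (i + 1) (Nat.succ_le_succ (Nat.zero_le i)) ω,
        if_pos (Nat.succ_le_of_lt (Finset.mem_range.mp hi))]
      simp
    have hMn1 : M (n + 1) = c • fun ω => (N (n + 1) ω : ℝ) := by
      rw [hMfun (n + 1)]
      funext ω
      simp [hc, smul_eq_mul]
    have e1 : μ[M (n + 1) | ℱ n] =ᵐ[μ] c • μ[(fun ω => (N (n + 1) ω : ℝ)) | ℱ n] := by
      rw [hMn1]; exact condExp_smul c _ (ℱ n)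
    have e2 : μ[(fun ω => (N (n + 1) ω : ℝ)) | ℱ n] =ᵐ[μ] μ[W | ℱ n] + μ[S | ℱ n] := by
      rw [hdecomp]; exact condExp_add hWint hSint (ℱ n)
    have e3 : μ[W | ℱ n] = W := condExp_of_stronglyMeasurable (ℱ.le n) hWsm hWint
    have e4 : μ[S | ℱ n] =ᵐ[μ] fun ω => m * (N n ω : ℝ) := (hcond n).symm
    have hWle : ∀ ω, W ω ≤ (N n ω : ℝ) := by
      intro ω
      rw [hNcast n ω]
      refine Finset.sum_le_sum_of_subset_of_nonneg ?_ (fun i _ _ => Nat.cast_nonneg _)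
      exact Finset.range_subset_range.2 (hstep n)
    filter_upwards [e1, e2, e4] with ω h1 h2 h4
    have hc1 : 0 ≤ c := inv_nonneg.2 (hm1n (n + 1)).le
    calc (μ[M (n + 1) | ℱ n]) ω
        = c * (μ[(fun ω => (N (n + 1) ω : ℝ)) | ℱ n]) ω := by
          rw [h1]; simp [smul_eq_mul]
      _ = c * ((μ[W | ℱ n]) ω + (μ[S | ℱ n]) ω) := by rw [h2]; simp
      _ = c * (W ω + m * (N n ω : ℝ)) := by rw [e3, h4]
      _ ≤ c * ((N n ω : ℝ) + m * (N n ω : ℝ)) :=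
          mul_le_mul_of_nonneg_left (add_le_add_left (hWle ω) _) hc1
      _ = M n ω := by
          rw [hMfun n]
          show c * ((N n ω : ℝ) + m * (N n ω : ℝ)) = ((m + 1) ^ n)⁻¹ * (N n ω : ℝ)
          have h5 : ((N n ω : ℕ) : ℝ) + m * ((N n ω : ℕ) : ℝ)
              = (m + 1) * ((N n ω : ℕ) : ℝ) := by ring
          rw [hc, pow_succ, mul_inv, h5, mul_assoc, inv_mul_cancel_left₀ (ne_of_gt hm1)]
  refine ⟨hnonneg, hsuper, ?_⟩
  -- convergence
  have hintle : ∀ n, ∫ ω, M n ω ∂μ ≤ ∫ ω, M 0 ω ∂μ := by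
    intro n
    have hle := hsuper.2.1 0 n (Nat.zero_le n)
    calc ∫ ω, M n ω ∂μ = ∫ ω, (μ[M n | ℱ 0]) ω ∂μ :=
          (integral_condExp (ℱ.le 0)).symm
      _ ≤ ∫ ω, M 0 ω ∂μ := integral_mono_ae integrable_condExp (hMint 0) hle
  have hbdd : ∀ n, eLpNorm ((-M) n) 1 μ ≤ (∫ ω, M 0 ω ∂μ).toNNReal := by
    intro n
    have hE : eLpNorm ((-M) n) 1 μ = eLpNorm (M n) 1 μ := by
      simp only [Pi.neg_apply]
      exact eLpNorm_neg (M n) 1 μ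
    rw [hE, eLpNorm_one_eq_lintegral_enorm,
      ← ofReal_integral_norm_eq_lintegral_enorm (hMint n)]
    have : ∫ ω, ‖M n ω‖ ∂μ = ∫ ω, M n ω ∂μ :=
      integral_congr_ae (Eventually.of_forall fun ω => Real.norm_of_nonneg (hnonneg n ω))
    rw [this]
    exact ENNReal.ofReal_le_ofReal (hintle n)
  have hsub : Submartingale (-M) ℱ μ := hsuper.neg
  have hconv := hsub.ae_tendsto_limitProcess hbdd
  refine ⟨fun ω => -(ℱ.limitProcess (-M) μ ω), ?_, ?_⟩
  · filter_upwards [hconv] with ω hω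
    have h0 : Tendsto (fun n => M n ω) atTop (nhds (-(ℱ.limitProcess (-M) μ ω))) := by
      have := hω.neg
      simpa using this
    exact ge_of_tendsto' h0 (fun n => hnonneg n ω)
  · filter_upwards [hconv] with ω hω
    have := hω.neg
    simpa using this
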